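/- Let t > 1/2 and let f : ℝ → ℂ be a continuous 1-periodic function whose Fourier coefficients ĉ_n = ∫₀¹ f(t') e^{−2πint'} dt' satisfy ∑_{n ∈ ℤ} |ĉ_n| < ∞ and E := ∑_{n ≠ 0} |n|^{2t} |ĉ_n|² < ∞. Then for every positive integer N, the trapezoidal rule error satisfies | (1/N) ∑_{k=0}^{N−1} f(k/N) − ∫₀¹ f(s) ds | ≤ ( 2 ∑_{m=1}^{∞} m^{−2t} )^{1/2} · N^{−t} · E^{1/2}; in particular the trapezoidal rule for 1-periodic functions in the Sobolev class H^t is of order O(h^t) with h = 1/N. -/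

import Mathlib

open Complex Real

-- Cauchy–Schwarz for tsum
lemma trap_CS {ι : Type*} (a b : ι → ℝ) (ha : ∀ i, 0 ≤ a i) (hb : ∀ i, 0 ≤ b i)
    (ha2 : Summable fun i => a i ^ 2) (hb2 : Summable fun i => b i ^ 2) :
    ∑' i, a i * b i ≤ Real.sqrt (∑' i, a i ^ 2) * Real.sqrt (∑' i, b i ^ 2) := by
  have hab : Summable fun i => a i * b i := by
    refine Summable.of_nonneg_of_le (fun i => mul_nonneg (ha i) (hb i)) (fun i => ?_)
      ((ha2.add hb2).mul_left (1/2))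
    nlinarith [sq_nonneg (a i - b i)]
  refine Summable.tsum_le_of_sum_le hab fun s => ?_
  have h1 := Finset.sum_mul_sq_le_sq_mul_sq s a b
  have hA : (0:ℝ) ≤ ∑' i, a i ^ 2 := tsum_nonneg fun i => sq_nonneg _
  have hB : (0:ℝ) ≤ ∑' i, b i ^ 2 := tsum_nonneg fun i => sq_nonneg _
  have h2 : ∑ i ∈ s, a i ^ 2 ≤ ∑' i, a i ^ 2 := Summable.sum_le_tsum s (fun i _ => sq_nonneg _) ha2
  have h3 : ∑ i ∈ s, b i ^ 2 ≤ ∑' i, b i ^ 2 := Summable.sum_le_tsum s (fun i _ => sq_nonneg _) hb2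
  have h4 : (∑ i ∈ s, a i * b i) ^ 2 ≤ (∑' i, a i ^ 2) * (∑' i, b i ^ 2) :=
    h1.trans (mul_le_mul h2 h3 (Finset.sum_nonneg fun i _ => sq_nonneg _) hA)
  have h5 : 0 ≤ ∑ i ∈ s, a i * b i := Finset.sum_nonneg fun i _ => mul_nonneg (ha i) (hb i)
  calc ∑ i ∈ s, a i * b i ≤ Real.sqrt ((∑' i, a i ^ 2) * (∑' i, b i ^ 2)) := by
        rw [show (∑ i ∈ s, a i * b i) = Real.sqrt ((∑ i ∈ s, a i * b i)^2) from
          (Real.sqrt_sq h5).symm]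
        exact Real.sqrt_le_sqrt h4
    _ = _ := Real.sqrt_mul hA _

-- geometric sum of roots of unity
lemma trap_expsum (N : ℕ) (hN : 0 < N) (n : ℤ) :
    ∑ k ∈ Finset.range N, Complex.exp (2 * (Real.pi:ℂ) * Complex.I * n * k / N) =
      if (N:ℤ) ∣ n then (N:ℂ) else 0 := by
  have hNC : (N:ℂ) ≠ 0 := Nat.cast_ne_zero.mpr hN.ne'
  have hπ : (Real.pi:ℂ) ≠ 0 := Complex.ofReal_ne_zero.mpr Real.pi_ne_zero
  set z : ℂ := Complex.exp (2 * (Real.pi:ℂ) * Complex.I * n / N) with hzdef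
  have hz : ∀ k : ℕ, Complex.exp (2 * (Real.pi:ℂ) * Complex.I * n * k / N) = z ^ k := by
    intro k
    rw [hzdef, ← Complex.exp_nat_mul]
    congr 1
    field_simp
  rw [Finset.sum_congr rfl fun k _ => hz k]
  by_cases hdvd : (N:ℤ) ∣ n
  · obtain ⟨m, rfl⟩ := hdvd
    have hz1 : z = 1 := by
      rw [hzdef]
      have : (2 * (Real.pi:ℂ) * Complex.I * ((N:ℤ) * m : ℤ) / N : ℂ) =
          (m:ℂ) * (2 * Real.pi * Complex.I) := by
        push_cast
        field_simp
      rw [this, Complex.exp_int_mul_two_pi_mul_I]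
    simp [hz1, if_pos (Dvd.intro m rfl)]
  · have hzN : z ^ N = 1 := by
      rw [hzdef, ← Complex.exp_nat_mul]
      have : (N:ℂ) * (2 * (Real.pi:ℂ) * Complex.I * n / N) =
          (n:ℂ) * (2 * Real.pi * Complex.I) := by field_simp
      rw [this, Complex.exp_int_mul_two_pi_mul_I]
    have hz1 : z ≠ 1 := by
      intro h
      rw [hzdef, Complex.exp_eq_one_iff] at h
      obtain ⟨m, hm⟩ := h
      apply hdvd
      refine ⟨m, ?_⟩
      have him : Complex.I ≠ 0 := Complex.I_ne_zero
      have hne : (2:ℂ) * Real.pi * Complex.I ≠ 0 := by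
        simp [hπ, him]
      have : (n:ℂ) = (N:ℂ) * m := by
        have h1 : 2 * (Real.pi:ℂ) * Complex.I * n / N = m * (2 * Real.pi * Complex.I) := hm
        field_simp at h1
        have h2 : (2 * (Real.pi:ℂ) * Complex.I) * n = (2 * Real.pi * Complex.I) * (m * N) := by
          rw [h1]; ring
        have := mul_left_cancel₀ hne h2
        rw [this]; ring
      exact_mod_cast this
    rw [geom_sum_eq hz1, hzN, if_neg hdvd]
    simp

set_option maxHeartbeats 1000000 in
lemma trap_pseries (t : ℝ) (ht : 1 / 2 < t) :
    Summable (fun n : ℤ => |(n:ℝ)| ^ (-(2*t))) ∧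
    ∑' n : ℤ, |(n:ℝ)| ^ (-(2*t)) = 2 * ∑' m : ℕ+, (m:ℝ) ^ (-(2*t)) := by
  have hexp : -(2*t) ≠ 0 := by intro h; nlinarith
  have hG0 : |((0:ℤ):ℝ)| ^ (-(2*t)) = 0 := by
    norm_num [Real.zero_rpow hexp]
  have heq : ∀ n : ℕ, |((n:ℤ):ℝ)| ^ (-(2*t)) = (n:ℝ) ^ (-(2*t)) := by
    intro n
    push_cast
    rw [_root_.abs_of_nonneg (Nat.cast_nonneg n)]
  have heqneg : ∀ n : ℕ, |(↑(-(n:ℤ)) : ℝ)| ^ (-(2*t)) = (n:ℝ) ^ (-(2*t)) := by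
    intro n
    push_cast
    rw [abs_neg, _root_.abs_of_nonneg (Nat.cast_nonneg n)]
  have Snat : Summable fun n : ℕ => (n:ℝ) ^ (-(2*t)) :=
    Real.summable_nat_rpow.mpr (by linarith)
  have S1 : Summable fun n : ℕ => |((n:ℤ):ℝ)| ^ (-(2*t)) := Snat.congr fun n => (heq n).symm
  have S2 : Summable fun n : ℕ => |(↑(-(n:ℤ)) : ℝ)| ^ (-(2*t)) := Snat.congr fun n => (heqneg n).symm
  have SG : Summable (fun n : ℤ => |(n:ℝ)| ^ (-(2*t))) := Summable.of_nat_of_neg S1 S2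
  refine ⟨SG, ?_⟩
  rw [Summable.tsum_of_nat_of_neg S1 S2]
  have h1 : ∑' n : ℕ, |((n:ℤ):ℝ)| ^ (-(2*t)) = ∑' n : ℕ, (n:ℝ) ^ (-(2*t)) := tsum_congr heq
  have h2 : ∑' n : ℕ, |(↑(-(n:ℤ)) : ℝ)| ^ (-(2*t)) = ∑' n : ℕ, (n:ℝ) ^ (-(2*t)) := tsum_congr heqneg
  have h3 : ∑' m : ℕ+, ((m:ℕ):ℝ) ^ (-(2*t)) = ∑' n : ℕ, (n:ℝ) ^ (-(2*t)) := by
    refine Function.Injective.tsum_eq (f := fun n : ℕ => (n:ℝ) ^ (-(2*t)))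
      (g := ((↑) : ℕ+ → ℕ)) PNat.coe_injective ?_
    intro n hn
    rcases Nat.eq_zero_or_pos n with rfl | hpos
    · exfalso
      apply hn
      simp [Function.support, Real.zero_rpow hexp]
    · exact ⟨⟨n, hpos⟩, rfl⟩
  rw [h1, h2, hG0, ← h3]
  ring


set_option maxHeartbeats 1000000 in
/-- Trapezoidal rule error for 1-periodic functions of Sobolev class `H^t`, `t > 1/2`: the
`N`-point equal-weight quadrature error is bounded by `(2 ∑_{m≥1} m^{-2t})^{1/2} N^{-t} E^{1/2}`
where `E = ∑_{n ≠ 0} |n|^{2t} |ĉ_n|²`; in particular the rule is of order `O(h^t)`, `h = 1/N`. -/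
theorem trapezoidal_rule_sobolev_error (t : ℝ) (ht : 1 / 2 < t)
    (f : ℝ → ℂ) (hf : Continuous f) (hper : Function.Periodic f 1)
    (c : ℤ → ℂ)
    (hc : ∀ n : ℤ, c n = ∫ s in (0:ℝ)..1,
      f s * Complex.exp (-(2 * (Real.pi : ℂ) * Complex.I * (n : ℂ) * (s : ℂ))))
    (hsum : Summable fun n : ℤ => ‖c n‖)
    (hE : Summable fun n : {n : ℤ // n ≠ 0} => |((n : ℤ) : ℝ)| ^ (2 * t) * ‖c n‖ ^ 2) :
    ∀ N : ℕ, 0 < N →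
      ‖(1 / (N : ℂ)) * ∑ k ∈ Finset.range N, f ((k : ℝ) / N) - ∫ s in (0:ℝ)..1, f s‖ ≤
        Real.sqrt (2 * ∑' m : ℕ+, (m : ℝ) ^ (-(2 * t))) * (N : ℝ) ^ (-t) *
          Real.sqrt (∑' n : {n : ℤ // n ≠ 0}, |((n : ℤ) : ℝ)| ^ (2 * t) * ‖c n‖ ^ 2) := by
  intro N hN
  haveI : Fact (0 < (1:ℝ)) := ⟨one_pos⟩
  have hNR : (0:ℝ) < N := Nat.cast_pos.mpr hN
  have hNC : (N:ℂ) ≠ 0 := Nat.cast_ne_zero.mpr hN.ne'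
  -- the function on the circle
  set F : C(AddCircle (1:ℝ), ℂ) := ⟨hper.lift, by
    exact Continuous.quotient_liftOn' hf _⟩ with hFdef
  have hFcoe : ∀ x : ℝ, F (x : AddCircle (1:ℝ)) = f x := fun x => rfl
  -- Fourier coefficients of F are c
  have hcoeff : ∀ n : ℤ, fourierCoeff (⇑F) n = c n := by
    intro n
    rw [fourierCoeff_eq_intervalIntegral (⇑F) n 0, hc n]
    rw [zero_add]
    norm_num
    refine intervalIntegral.integral_congr fun x hx => ?_
    show (starRingEnd ℂ) (Complex.exp (2 * (Real.pi:ℂ) * Complex.I * n * x)) * f x =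
      f x * Complex.exp (-(2 * (Real.pi:ℂ) * Complex.I * n * x))
    rw [mul_comm]
    congr 1
    rw [← Complex.exp_conj]
    congr 1
    simp only [map_mul, Complex.conj_I, Complex.conj_ofReal, map_intCast, map_ofNat]
    ring
  have hsc : Summable c := hsum.of_norm
  have hscF : Summable (fourierCoeff (⇑F)) := by
    refine hsc.congr fun n => (hcoeff n).symm
  -- pointwise Fourier expansion
  have hfx : ∀ x : ℝ, HasSum
      (fun n : ℤ => c n * Complex.exp (2 * (Real.pi:ℂ) * Complex.I * n * x)) (f x) := by
    intro x
    have h := has_pointwise_sum_fourier_series_of_summable hscF (x : AddCircle (1:ℝ))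
    rw [hFcoe x] at h
    refine h.congr_fun fun n => ?_
    rw [hcoeff n, fourier_coe_apply, smul_eq_mul]
    norm_num
  have hsumexp : ∀ x : ℝ, Summable (fun n : ℤ =>
      c n * Complex.exp (2 * (Real.pi:ℂ) * Complex.I * n * x)) := fun x => (hfx x).summable
  have hNZ : (N:ℤ) ≠ 0 := by exact_mod_cast hN.ne'
  have hexp2 : -(2*t) ≠ 0 := by intro h; nlinarith
  -- quadrature equals aliasing sum
  have h1 : ∑ k ∈ Finset.range N, f ((k:ℝ)/N)
      = ∑' n : ℤ, ∑ k ∈ Finset.range N,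
          c n * Complex.exp (2 * (Real.pi:ℂ) * Complex.I * n * (((k:ℝ)/N : ℝ) : ℂ)) := by
    have hts := Summable.tsum_finsetSum (s := Finset.range N)
      (f := fun (k : ℕ) (n : ℤ) => c n * Complex.exp
        (2 * (Real.pi:ℂ) * Complex.I * n * (((k:ℝ)/N : ℝ) : ℂ)))
      (fun k _ => hsumexp ((k:ℝ)/N))
    rw [hts]
    exact Finset.sum_congr rfl fun k _ => ((hfx _).tsum_eq).symm
  have h2 : ∀ n : ℤ, ∑ k ∈ Finset.range N,
      c n * Complex.exp (2 * (Real.pi:ℂ) * Complex.I * n * (((k:ℝ)/N : ℝ) : ℂ))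
      = c n * (if (N:ℤ) ∣ n then (N:ℂ) else 0) := by
    intro n
    rw [← Finset.mul_sum]
    congr 1
    rw [← trap_expsum N hN n]
    refine Finset.sum_congr rfl fun k _ => ?_
    congr 1
    push_cast
    ring
  have key : (1 / (N:ℂ)) * ∑ k ∈ Finset.range N, f ((k:ℝ)/N)
      = ∑' n : ℤ, (if (N:ℤ) ∣ n then c n else 0) := by
    rw [h1, ← tsum_mul_left]
    refine tsum_congr fun n => ?_
    rw [h2 n]
    split_ifs with h
    · field_simp
    · simp
  have hint : (∫ s in (0:ℝ)..1, f s) = c 0 := by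
    rw [hc 0]
    refine intervalIntegral.integral_congr fun x hx => ?_
    norm_num
  -- reindex to multiples of N
  have hinj : Function.Injective (fun m : ℤ => m * (N:ℤ)) := fun a b h =>
    mul_right_cancel₀ hNZ h
  have hsupp : Function.support (fun n : ℤ => if (N:ℤ) ∣ n then c n else 0)
      ⊆ Set.range (fun m : ℤ => m * (N:ℤ)) := by
    intro n hn
    by_cases hd : (N:ℤ) ∣ n
    · obtain ⟨m, rfl⟩ := hd
      exact ⟨m, by ring⟩
    · exact absurd (by simp [hd]) hn
  have hre : ∑' m : ℤ, (if (N:ℤ) ∣ (m * N) then c (m * N) else 0)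
      = ∑' n : ℤ, (if (N:ℤ) ∣ n then c n else 0) := hinj.tsum_eq hsupp
  have hgm : ∀ m : ℤ, (if (N:ℤ) ∣ (m * N) then c (m * N) else 0) = c (m * N) :=
    fun m => if_pos (dvd_mul_left _ _)
  have hsmN : Summable (fun m : ℤ => c (m * (N:ℤ))) := hsc.comp_injective hinj
  have hsplit : ∑' m : ℤ, c (m * (N:ℤ))
      = c 0 + ∑' m : {m : ℤ // m ≠ 0}, c ((m:ℤ) * N) := by
    rw [Summable.tsum_eq_add_tsum_ite hsmN 0]
    simp only [zero_mul]
    congr 1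
    have hsupp2 : Function.support (fun n : ℤ => if n = 0 then 0 else c (n * N))
        ⊆ Set.range (Subtype.val : {m : ℤ // m ≠ 0} → ℤ) := by
      intro n hn
      by_cases h : n = 0
      · exact absurd (by simp [h]) hn
      · exact ⟨⟨n, h⟩, rfl⟩
    have hts2 := Function.Injective.tsum_eq
      (f := fun n : ℤ => if n = 0 then 0 else c (n * N))
      (g := (Subtype.val : {m : ℤ // m ≠ 0} → ℤ)) Subtype.val_injective hsupp2
    rw [← hts2]
    exact tsum_congr fun m => if_neg m.2
  have herr : (1 / (N:ℂ)) * ∑ k ∈ Finset.range N, f ((k:ℝ)/N) - ∫ s in (0:ℝ)..1, f s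
      = ∑' m : {m : ℤ // m ≠ 0}, c ((m:ℤ) * N) := by
    rw [key, hint, ← hre, tsum_congr hgm, hsplit]
    ring
  rw [herr]
  -- norms and Cauchy-Schwarz
  set r : {m : ℤ // m ≠ 0} → ℝ := fun m => |((m:ℤ):ℝ)| * N with hrdef
  have hrpos : ∀ m : {m : ℤ // m ≠ 0}, 0 < r m := by
    intro m
    have : ((m:ℤ):ℝ) ≠ 0 := Int.cast_ne_zero.mpr m.2
    exact mul_pos (abs_pos.mpr this) hNR
  set a : {m : ℤ // m ≠ 0} → ℝ := fun m => r m ^ (-t) with hadef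
  set b : {m : ℤ // m ≠ 0} → ℝ := fun m => r m ^ t * ‖c ((m:ℤ) * N)‖ with hbdef
  have hab : ∀ m, a m * b m = ‖c ((m:ℤ) * N)‖ := by
    intro m
    rw [hadef, hbdef, ← mul_assoc, ← Real.rpow_add (hrpos m)]
    norm_num
  have hasq : ∀ m, a m ^ 2 = r m ^ (-(2*t)) := by
    intro m
    rw [hadef, ← Real.rpow_natCast (r m ^ (-t)) 2, ← Real.rpow_mul (hrpos m).le]
    congr 1
    push_cast
    ring
  have hbsq : ∀ m, b m ^ 2 = r m ^ (2*t) * ‖c ((m:ℤ) * N)‖ ^ 2 := by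
    intro m
    rw [hbdef, mul_pow]
    congr 1
    rw [← Real.rpow_natCast (r m ^ t) 2, ← Real.rpow_mul (hrpos m).le]
    congr 1
    push_cast
    ring
  -- the injection into nonzero integers
  have hNZc : ∀ m : {m : ℤ // m ≠ 0}, (m:ℤ) * N ≠ 0 := fun m => mul_ne_zero m.2 hNZ
  set j : {m : ℤ // m ≠ 0} → {n : ℤ // n ≠ 0} := fun m => ⟨(m:ℤ) * N, hNZc m⟩ with hjdef
  have hjinj : Function.Injective j := by
    intro m₁ m₂ h
    have := congrArg (fun x : {n : ℤ // n ≠ 0} => (x:ℤ)) h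
    exact Subtype.ext (mul_right_cancel₀ hNZ this)
  have hjr : ∀ m, |(((j m : ℤ)):ℝ)| = r m := by
    intro m
    show |(((m:ℤ) * (N:ℤ) : ℤ):ℝ)| = |((m:ℤ):ℝ)| * N
    push_cast
    rw [abs_mul, Nat.abs_cast]
  have hb2 : Summable fun m => b m ^ 2 := by
    refine (hE.comp_injective hjinj).congr fun m => ?_
    rw [hbsq m, ← hjr m]
    rfl
  have hnormsum : Summable (fun m : {m : ℤ // m ≠ 0} => ‖c ((m:ℤ) * N)‖) :=
    hsum.comp_injective (hinj.comp Subtype.val_injective)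
  have ha2 : Summable fun m => a m ^ 2 := by
    have hsub : Summable (fun m : {m : ℤ // m ≠ 0} => |((m:ℤ):ℝ)| ^ (-(2*t))) :=
      (trap_pseries t ht).1.comp_injective Subtype.val_injective
    refine (hsub.mul_right ((N:ℝ) ^ (-(2*t)))).congr fun m => ?_
    rw [hasq m]
    exact (Real.mul_rpow (abs_nonneg _) hNR.le).symm
  have e1 : ∀ m, a m ^ 2 = |((m:ℤ):ℝ)| ^ (-(2*t)) * (N:ℝ) ^ (-(2*t)) := fun m => by
    rw [hasq m]
    exact Real.mul_rpow (abs_nonneg _) hNR.le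
  have hsubZ : ∑' m : {m : ℤ // m ≠ 0}, |((m:ℤ):ℝ)| ^ (-(2*t))
      = ∑' n : ℤ, |(n:ℝ)| ^ (-(2*t)) := by
    refine Function.Injective.tsum_eq (f := fun n : ℤ => |(n:ℝ)| ^ (-(2*t)))
      (g := (Subtype.val : {m : ℤ // m ≠ 0} → ℤ)) Subtype.val_injective ?_
    intro n hn
    by_cases h : n = 0
    · exact absurd (by simp [h, Real.zero_rpow hexp2]) hn
    · exact ⟨⟨n, h⟩, rfl⟩
  have hsumA : ∑' m : {m : ℤ // m ≠ 0}, a m ^ 2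
      = (2 * ∑' m : ℕ+, (m:ℝ) ^ (-(2*t))) * (N:ℝ) ^ (-(2*t)) := by
    rw [tsum_congr e1, tsum_mul_right, hsubZ, (trap_pseries t ht).2]
  have hBE : ∑' m, b m ^ 2 ≤ ∑' n : {n : ℤ // n ≠ 0}, |((n:ℤ):ℝ)| ^ (2*t) * ‖c n‖ ^ 2 := by
    refine Summable.tsum_le_tsum_of_inj j hjinj (fun n _ => ?_) (fun m => ?_) hb2 hE
    · exact mul_nonneg (Real.rpow_nonneg (abs_nonneg _) _) (sq_nonneg _)
    · rw [hbsq m, ← hjr m]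
  have hCS : ∑' m : {m : ℤ // m ≠ 0}, ‖c ((m:ℤ) * N)‖ ≤
      Real.sqrt (∑' m, a m ^ 2) * Real.sqrt (∑' m, b m ^ 2) := by
    have h := trap_CS a b (fun m => Real.rpow_nonneg (hrpos m).le _)
      (fun m => mul_nonneg (Real.rpow_nonneg (hrpos m).le _) (norm_nonneg _)) ha2 hb2
    calc ∑' m : {m : ℤ // m ≠ 0}, ‖c ((m:ℤ) * N)‖ = ∑' m, a m * b m :=
          (tsum_congr hab).symm
      _ ≤ _ := h
  have hT0 : (0:ℝ) ≤ 2 * ∑' m : ℕ+, (m:ℝ) ^ (-(2*t)) := by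
    have : (0:ℝ) ≤ ∑' m : ℕ+, (m:ℝ) ^ (-(2*t)) :=
      tsum_nonneg fun m => Real.rpow_nonneg (Nat.cast_nonneg _) _
    linarith
  have hsqrtN : Real.sqrt ((N:ℝ) ^ (-(2*t))) = (N:ℝ) ^ (-t) := by
    rw [show -(2*t) = (-t) * 2 by ring, Real.rpow_mul hNR.le,
      show ((2:ℝ)) = ((2:ℕ):ℝ) by norm_num, Real.rpow_natCast]
    exact Real.sqrt_sq (Real.rpow_nonneg hNR.le _)
  calc ‖∑' m : {m : ℤ // m ≠ 0}, c ((m:ℤ) * N)‖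
      ≤ ∑' m : {m : ℤ // m ≠ 0}, ‖c ((m:ℤ) * N)‖ := norm_tsum_le_tsum_norm hnormsum
    _ ≤ Real.sqrt (∑' m, a m ^ 2) * Real.sqrt (∑' m, b m ^ 2) := hCS
    _ = Real.sqrt (2 * ∑' m : ℕ+, (m:ℝ) ^ (-(2*t))) * (N:ℝ) ^ (-t) *
          Real.sqrt (∑' m, b m ^ 2) := by
        rw [hsumA, Real.sqrt_mul hT0, hsqrtN]
    _ ≤ Real.sqrt (2 * ∑' m : ℕ+, (m:ℝ) ^ (-(2*t))) * (N:ℝ) ^ (-t) *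
          Real.sqrt (∑' n : {n : ℤ // n ≠ 0}, |((n:ℤ):ℝ)| ^ (2*t) * ‖c n‖ ^ 2) := by
        refine mul_le_mul_of_nonneg_left (Real.sqrt_le_sqrt hBE) ?_
        positivity
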